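/- arXiv:2412.05283 — 2 statements merged into one kernel-verified Lean document; each statement's English description precedes it below -/
import Mathlib

section
/- Let n ≥ 2 and 1 ≤ k ≤ n−1. The set of polynomials {e₁, e₂, ..., e_{n−1}, x₁ + x₂ + ⋯ + x_k} is algebraically independent over ℂ, where e_i denotes the i-th elementary symmetric polynomial in the variables x₁, ..., x_n. -/
open MvPolynomial

private lemma transfer_isAlgebraic {F R1 R2 : Type*} [CommRing F] [CommRing R1] [CommRing R2]
    [Algebra R1 F] [Algebra R2 F] (g : R1 →+* R2) (hginj : Function.Injective g)
    (hg : (algebraMap R2 F).comp g = algebraMap R1 F) {a : F}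
    (h : IsAlgebraic R1 a) : IsAlgebraic R2 a := by
  obtain ⟨q, hq0, hqa⟩ := h
  refine ⟨q.map g, fun hh => hq0 (Polynomial.map_injective g hginj (by simpa using hh)), ?_⟩
  rw [Polynomial.aeval_def, Polynomial.eval₂_map, hg, ← Polynomial.aeval_def, hqa]

private lemma descend_isAlgebraic {F : Type*} [Field F] [Algebra ℂ F] {ι : Type*} (v : ι → F)
    {a : F} (h : IsAlgebraic (IntermediateField.adjoin ℂ (Set.range v)) a) :
    IsAlgebraic (Algebra.adjoin ℂ (Set.range v)) a := by
  classical
  obtain ⟨q, hq0, hqa⟩ := h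
  have key : ∀ i : ℕ, ∃ rs : MvPolynomial ι ℂ × MvPolynomial ι ℂ,
      (MvPolynomial.aeval v) rs.2 ≠ 0 ∧
      (algebraMap (IntermediateField.adjoin ℂ (Set.range v)) F (q.coeff i)) *
        MvPolynomial.aeval v rs.2 = MvPolynomial.aeval v rs.1 := by
    intro i
    obtain ⟨r, s, hrs⟩ := (IntermediateField.mem_adjoin_range_iff ℂ v _).1 (q.coeff i).2
    by_cases h0 : MvPolynomial.aeval v s = 0
    · refine ⟨(0, 1), by simp, ?_⟩
      have hz : (algebraMap (IntermediateField.adjoin ℂ (Set.range v)) F (q.coeff i)) = 0 := by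
        show ((q.coeff i : F)) = 0
        rw [hrs, h0, div_zero]
      simp [hz]
    · refine ⟨(r, s), h0, ?_⟩
      show ((q.coeff i : F)) * _ = _
      rw [hrs, div_mul_cancel₀ _ h0]
  choose rs hs hrs using key
  set N := q.natDegree + 1 with hN
  have hDne : (∏ i ∈ Finset.range N, MvPolynomial.aeval v (rs i).2) ≠ 0 :=
    Finset.prod_ne_zero_iff.2 fun i _ => hs i
  have memB : ∀ u : MvPolynomial ι ℂ, MvPolynomial.aeval v u ∈ Algebra.adjoin ℂ (Set.range v) := by
    intro u
    rw [Algebra.adjoin_range_eq_range_aeval]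
    exact ⟨u, rfl⟩
  set b : ℕ → Algebra.adjoin ℂ (Set.range v) := fun i =>
    ⟨MvPolynomial.aeval v ((rs i).1 * ∏ j ∈ (Finset.range N).erase i, (rs j).2), memB _⟩ with hb
  have hbval : ∀ i ∈ Finset.range N,
      (algebraMap (Algebra.adjoin ℂ (Set.range v)) F (b i)) =
      (algebraMap (IntermediateField.adjoin ℂ (Set.range v)) F (q.coeff i)) *
        ∏ j ∈ Finset.range N, MvPolynomial.aeval v (rs j).2 := by
    intro i hi
    have h1 : (algebraMap (Algebra.adjoin ℂ (Set.range v)) F (b i)) =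
        MvPolynomial.aeval v (rs i).1 * ∏ j ∈ (Finset.range N).erase i,
          MvPolynomial.aeval v (rs j).2 := by
      show MvPolynomial.aeval v ((rs i).1 * ∏ j ∈ (Finset.range N).erase i, (rs j).2) = _
      rw [map_mul, map_prod]
    rw [h1, ← hrs i, mul_assoc,
      Finset.mul_prod_erase (Finset.range N) (fun j => (MvPolynomial.aeval v) (rs j).2) hi]
  refine ⟨∑ i ∈ Finset.range N, Polynomial.C (b i) * Polynomial.X ^ i, ?_, ?_⟩
  · intro hzero
    have hcoeff : (∑ i ∈ Finset.range N, Polynomial.C (b i) * Polynomial.X ^ i).coeff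
        q.natDegree = b q.natDegree := by
      rw [Polynomial.finset_sum_coeff]
      simp only [Polynomial.coeff_C_mul, Polynomial.coeff_X_pow, mul_ite, mul_one, mul_zero]
      rw [Finset.sum_ite_eq (Finset.range N) q.natDegree b]
      simp [hN]
    rw [hzero, Polynomial.coeff_zero] at hcoeff
    have hbv : (algebraMap (Algebra.adjoin ℂ (Set.range v)) F (b q.natDegree)) = 0 := by
      rw [← hcoeff, map_zero]
    rw [hbval _ (by simp [hN]), mul_eq_zero] at hbv
    rcases hbv with hbv | hbv
    · have h2 : q.coeff q.natDegree = 0 :=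
        (algebraMap (IntermediateField.adjoin ℂ (Set.range v)) F).injective
          (by rw [hbv, map_zero])
      exact hq0 (Polynomial.leadingCoeff_eq_zero.1 h2)
    · exact hDne hbv
  · have hev : Polynomial.aeval a (∑ i ∈ Finset.range N, Polynomial.C (b i) * Polynomial.X ^ i) =
        ∑ i ∈ Finset.range N,
          (algebraMap (Algebra.adjoin ℂ (Set.range v)) F (b i)) * a ^ i := by
      rw [map_sum]
      refine Finset.sum_congr rfl fun i _ => ?_
      rw [map_mul, Polynomial.aeval_C, map_pow, Polynomial.aeval_X]
    rw [hev]
    have h2 : ∀ i ∈ Finset.range N,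
        (algebraMap (Algebra.adjoin ℂ (Set.range v)) F (b i)) * a ^ i =
        (∏ j ∈ Finset.range N, MvPolynomial.aeval v (rs j).2) *
          ((algebraMap (IntermediateField.adjoin ℂ (Set.range v)) F (q.coeff i)) * a ^ i) := by
      intro i hi; rw [hbval i hi]; ring
    rw [Finset.sum_congr rfl h2, ← Finset.mul_sum]
    have h3 : ∑ i ∈ Finset.range N,
        (algebraMap (IntermediateField.adjoin ℂ (Set.range v)) F (q.coeff i)) * a ^ i = 0 := by
      have h4 := hqa
      rw [Polynomial.aeval_eq_sum_range] at h4
      simp_rw [Algebra.smul_def] at h4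
      exact h4
    rw [h3, mul_zero]

set_option maxHeartbeats 1000000 in
set_option synthInstance.maxHeartbeats 1000000 in
private lemma stmt0_core (m k : ℕ) (hm : 1 ≤ m) (hk1 : 1 ≤ k) (hk2 : k ≤ m) :
    let A := MvPolynomial (Fin (m+1)) ℂ
    let F := FractionRing A
    let ι : A →ₐ[ℂ] F := IsScalarTower.toAlgHom ℂ A F
    let famA : Fin (m+1) → A := fun i => esymm (Fin (m+1)) ℂ ((i : ℕ) + 1)
    let E' : Fin m → F := fun i => ι (famA (Fin.castSucc i))
    let p : A := ∑ j ∈ Finset.univ.filter (fun j : Fin (m+1) => (j : ℕ) < k), MvPolynomial.X j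
    IsAlgebraic (IntermediateField.adjoin ℂ (Set.range E')) (ι p) →
    IsAlgebraic (IntermediateField.adjoin ℂ (Set.range E')) (ι (esymm (Fin (m+1)) ℂ (m+1))) := by
  intro A F ι famA E' p hPK
  classical
  have hιinj : Function.Injective ι := IsFractionRing.injective A F
  set K := IntermediateField.adjoin ℂ (Set.range E') with hK
  -- permutation homs on F
  have hrinj : ∀ σ : Equiv.Perm (Fin (m+1)),
      Function.Injective (ι.comp (rename (R := ℂ) σ)) := fun σ =>
    hιinj.comp (rename_injective σ σ.injective)
  set φ : Equiv.Perm (Fin (m+1)) → (F →ₐ[ℂ] F) := fun σ =>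
    IsFractionRing.liftAlgHom (K := F) (hrinj σ) with hφ
  have hφι : ∀ (σ : Equiv.Perm (Fin (m+1))) (y : A), φ σ (ι y) = ι (rename σ y) := by
    intro σ y
    show IsFractionRing.liftAlgHom (hrinj σ) (algebraMap A F y) = _
    rw [IsFractionRing.liftAlgHom_apply, IsFractionRing.lift_algebraMap]
    rfl
  -- φ σ fixes K pointwise
  have hφE' : ∀ (σ : Equiv.Perm (Fin (m+1))) (i : Fin m), φ σ (E' i) = E' i := by
    intro σ i
    show φ σ (ι (famA (Fin.castSucc i))) = _
    rw [hφι]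
    congr 1
    exact rename_esymm _ _ _ _
  have hfix : ∀ (σ : Equiv.Perm (Fin (m+1))) (x : F), x ∈ K → φ σ x = x := by
    intro σ x hx
    obtain ⟨r, s, hrs⟩ := (IntermediateField.mem_adjoin_range_iff ℂ E' x).1 hx
    have haev : ∀ u : MvPolynomial (Fin m) ℂ, φ σ (aeval E' u) = aeval E' u := by
      intro u
      rw [comp_aeval_apply]
      have he : (fun i => φ σ (E' i)) = E' := funext (hφE' σ)
      rw [he]
    rw [hrs, map_div₀, haev, haev]
  -- conjugates of algebraic elements are algebraic
  have hconj : ∀ (σ : Equiv.Perm (Fin (m+1))) (a : F),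
      IsAlgebraic K a → IsAlgebraic K (φ σ a) := by
    intro σ a ⟨q, hq0, hqa⟩
    refine ⟨q, hq0, ?_⟩
    have hcmp : ((φ σ : F →+* F)).comp (algebraMap (↥K) F) = algebraMap (↥K) F :=
      RingHom.ext fun c => by simpa using hfix σ c.1 c.2
    have heq := Polynomial.hom_eval₂ q (algebraMap (↥K) F) ((φ σ : F →+* F)) a
    rw [hcmp] at heq
    simp only [RingHom.coe_coe] at heq
    rw [Polynomial.aeval_def, ← heq, ← Polynomial.aeval_def, hqa, map_zero]
  -- the integral closure
  have hKmem : ∀ x : F, x ∈ K → x ∈ integralClosure K F := by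
    intro x hx
    have : x = algebraMap K F ⟨x, hx⟩ := rfl
    rw [this]
    exact Subalgebra.algebraMap_mem _ _
  have halgmem : ∀ a : F, IsAlgebraic K a → a ∈ integralClosure K F := by
    intro a ha
    exact ha.isIntegral
  -- differences of variables
  haveI hchar : CharZero F := charZero_of_injective_algebraMap (algebraMap ℂ F).injective
  set a0 : Fin (m+1) := ⟨0, by omega⟩ with ha0
  set b0 : Fin (m+1) := ⟨k, by omega⟩ with hb0
  have hab : a0 ≠ b0 := by simp [ha0, hb0, Fin.ext_iff]; omega
  have ha0filt : a0 ∈ Finset.univ.filter (fun j : Fin (m+1) => (j : ℕ) < k) := by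
    simp [ha0]; omega
  have hdiff : ∀ i j : Fin (m+1), ι (X i) - ι (X j) ∈ integralClosure K F := by
    intro i j
    by_cases hij : i = j
    · rw [hij, sub_self]; exact Subalgebra.zero_mem _
    · set δ := Equiv.swap a0 i with hδ
      set b' := δ b0 with hb'
      have hδa : δ a0 = i := Equiv.swap_apply_left a0 i
      have hb'i : b' ≠ i := by
        intro h
        rw [hb', ← hδa] at h
        exact hab (δ.injective h).symm
      set σ := δ.trans (Equiv.swap b' j) with hσ
      have hσa : σ a0 = i := by
        rw [hσ, Equiv.trans_apply, hδa, Equiv.swap_apply_of_ne_of_ne hb'i.symm hij]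
      have hσb : σ b0 = j := by
        rw [hσ, Equiv.trans_apply, ← hb', Equiv.swap_apply_left]
      set τ := (Equiv.swap a0 b0).trans σ with hτ
      have hkey : rename σ p - rename τ p = (X i : A) - X j := by
        show rename σ p - rename τ p = (X i : A) - X j
        have hrs : ∀ ρ : Equiv.Perm (Fin (m+1)), rename (R := ℂ) ρ p =
            ∑ l ∈ Finset.univ.filter (fun j : Fin (m+1) => (j : ℕ) < k), X (ρ l) := by
          intro ρ
          rw [map_sum]
          exact Finset.sum_congr rfl fun l _ => rename_X _ _
        rw [hrs σ, hrs τ, ← Finset.sum_sub_distrib]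
        rw [Finset.sum_eq_single a0]
        · rw [hτ]
          simp only [Equiv.trans_apply, Equiv.swap_apply_left]
          rw [hσa, hσb]
        · intro l hl hla
          have hlb : l ≠ b0 := by
            intro h
            rw [h] at hl
            simp [hb0] at hl
          rw [hτ]
          simp only [Equiv.trans_apply]
          rw [Equiv.swap_apply_of_ne_of_ne hla hlb, sub_self]
        · intro h
          exact absurd ha0filt h
      have h1 : IsAlgebraic K (φ σ (ι p)) := hconj σ _ hPK
      have h2 : IsAlgebraic K (φ τ (ι p)) := hconj τ _ hPK
      have heq2 : φ σ (ι p) - φ τ (ι p) = ι (X i) - ι (X j) := by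
        rw [hφι, hφι, ← map_sub, hkey, map_sub]
      rw [← heq2]
      exact sub_mem (halgmem _ h1) (halgmem _ h2)
  -- e₁ lies in K
  have he1K : ι (esymm (Fin (m+1)) ℂ 1) ∈ K := by
    have h0 : ι (esymm (Fin (m+1)) ℂ 1) = E' ⟨0, hm⟩ := by
      show _ = ι (famA (Fin.castSucc ⟨0, hm⟩))
      congr 1
    rw [h0]
    exact IntermediateField.subset_adjoin ℂ _ ⟨_, rfl⟩
  -- each variable is integral over K
  have hXi : ∀ i : Fin (m+1), ι (X i) ∈ integralClosure K F := by
    intro i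
    have hsum : ∑ j : Fin (m+1), (ι (X i) - ι (X j)) ∈ integralClosure K F :=
      Subalgebra.sum_mem _ fun j _ => hdiff i j
    have hsumeq : ∑ j : Fin (m+1), (ι (X i) - ι (X j))
        = (m+1 : ℕ) • ι (X i) - ι (esymm (Fin (m+1)) ℂ 1) := by
      rw [Finset.sum_sub_distrib, Finset.sum_const, Finset.card_univ, Fintype.card_fin]
      congr 1
      rw [esymm_one, map_sum]
    have hmem2 : (m+1 : ℕ) • ι (X i) ∈ integralClosure K F := by
      have h3 := add_mem hsum (hKmem _ he1K)
      rwa [hsumeq, sub_add_cancel] at h3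
    have hc : ((m+1 : ℕ) : F) ≠ 0 := Nat.cast_ne_zero.2 (by omega)
    have hcinv : (((m+1 : ℕ) : F))⁻¹ ∈ K := K.inv_mem (natCast_mem K (m+1))
    have h4 : ι (X i) = (((m+1 : ℕ) : F))⁻¹ * ((m+1 : ℕ) • ι (X i)) := by
      rw [nsmul_eq_mul, inv_mul_cancel_left₀ hc]
    rw [h4]
    exact mul_mem (hKmem _ hcinv) hmem2
  -- the top elementary symmetric polynomial
  have hprod : esymm (Fin (m+1)) ℂ (m+1) = ∏ i : Fin (m+1), X i := by
    have hps : (Finset.univ : Finset (Fin (m+1))).powersetCard (m+1) = {Finset.univ} := by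
      have h5 := Finset.powersetCard_self (Finset.univ : Finset (Fin (m+1)))
      rwa [Finset.card_univ, Fintype.card_fin] at h5
    rw [esymm, hps, Finset.sum_singleton]
  refine isAlgebraic_iff_isIntegral.2 ?_
  show ι (esymm (Fin (m+1)) ℂ (m+1)) ∈ integralClosure K F
  rw [hprod, map_prod]
  exact Subalgebra.prod_mem _ fun i _ => hXi i


set_option maxHeartbeats 1000000 in
set_option synthInstance.maxHeartbeats 1000000 in
/-- For n ≥ 2 and 1 ≤ k ≤ n−1, the polynomials
e₁, ..., e_{n−1}, x₁ + ⋯ + x_k are algebraically independent over ℂ. -/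
theorem stmt0 (n k : ℕ) (hn : 2 ≤ n) (hk1 : 1 ≤ k) (hk2 : k ≤ n - 1) :
    AlgebraicIndependent ℂ (fun i : Fin n =>
      if (i : ℕ) < n - 1 then MvPolynomial.esymm (Fin n) ℂ ((i : ℕ) + 1)
      else ∑ j ∈ Finset.univ.filter (fun j : Fin n => (j : ℕ) < k),
        MvPolynomial.X j) := by
  classical
  obtain ⟨m, rfl⟩ : ∃ m, n = m + 1 := ⟨n - 1, by omega⟩
  have hm : 1 ≤ m := by omega
  have hk2' : k ≤ m := by omega
  set A := MvPolynomial (Fin (m+1)) ℂ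
  set F := FractionRing A
  set ι : A →ₐ[ℂ] F := IsScalarTower.toAlgHom ℂ A F with hι
  have hιinj : Function.Injective ι := IsFractionRing.injective A F
  set p : A := ∑ j ∈ Finset.univ.filter (fun j : Fin (m+1) => (j : ℕ) < k), MvPolynomial.X j
    with hp
  set famA : Fin (m+1) → A := fun i => esymm (Fin (m+1)) ℂ ((i : ℕ) + 1) with hfamA
  -- full esymm family is algebraically independent in A
  have hfull : AlgebraicIndependent ℂ famA := by
    rw [algebraicIndependent_iff_injective_aeval]
    have h := esymmAlgHom_injective (σ := Fin (m+1)) (n := m+1) ℂ (by simp)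
    have heq : (Subalgebra.val _).comp (esymmAlgHom (Fin (m+1)) ℂ (m+1)) = aeval famA := by
      ext i; simp [esymmAlgHom, hfamA]
    rw [← heq]
    exact Subtype.val_injective.comp h
  have hfullF : AlgebraicIndependent ℂ (ι ∘ famA) := hfull.map' hιinj
  set E' : Fin m → F := fun i => ι (famA (Fin.castSucc i)) with hE'
  have hE'indep : AlgebraicIndependent ℂ E' := hfullF.comp Fin.castSucc (Fin.castSucc_injective m)
  -- reduce to transcendence of ι p over adjoin of E'
  apply AlgebraicIndependent.of_comp ι
  have hcomp : (ι ∘ fun i : Fin (m+1) =>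
      if (i : ℕ) < m + 1 - 1 then esymm (Fin (m+1)) ℂ ((i : ℕ) + 1) else p)
      ∘ (finSuccEquivLast.symm : Option (Fin m) ≃ Fin (m+1)) =
      (fun o : Option (Fin m) => o.elim (ι p) E') := by
    funext o
    cases o with
    | none => simp [finSuccEquivLast]
    | some i => simp [finSuccEquivLast, hE', hfamA, Fin.castSucc_lt_last i]
  rw [← algebraicIndependent_equiv (finSuccEquivLast.symm : Option (Fin m) ≃ Fin (m+1)), hcomp,
    hE'indep.option_iff_transcendental (ι p)]
  intro halg
  -- move the hypothesis up to the intermediate field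
  have hBK : Algebra.adjoin ℂ (Set.range E') ≤
      (IntermediateField.adjoin ℂ (Set.range E')).toSubalgebra :=
    Algebra.adjoin_le (IntermediateField.subset_adjoin ℂ _)
  set incl : (Algebra.adjoin ℂ (Set.range E')) →+* (IntermediateField.adjoin ℂ (Set.range E')) :=
    { toFun := fun x => ⟨x.1, hBK x.2⟩
      map_one' := rfl
      map_mul' := fun _ _ => rfl
      map_zero' := rfl
      map_add' := fun _ _ => rfl } with hincl
  have hinclinj : Function.Injective incl := by
    intro x y h
    have hval : (incl x).1 = (incl y).1 := by rw [h]
    exact Subtype.ext hval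
  have hcompat : (algebraMap (↥(IntermediateField.adjoin ℂ (Set.range E'))) F).comp incl =
      algebraMap (↥(Algebra.adjoin ℂ (Set.range E'))) F := RingHom.ext fun x => rfl
  have hPK : IsAlgebraic (IntermediateField.adjoin ℂ (Set.range E')) (ι p) :=
    transfer_isAlgebraic (F := F) incl hinclinj hcompat halg
  -- core argument: the top esymm is then algebraic over the same field
  have hcore := stmt0_core m k hm hk1 hk2' hPK
  -- descend to the subalgebra
  have hdesc := descend_isAlgebraic E' hcore
  -- but the top esymm is transcendental over the adjoin of the first m esymms
  have hcomp2 : ((ι ∘ famA) ∘ (finSuccEquivLast.symm : Option (Fin m) ≃ Fin (m+1))) =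
      fun o : Option (Fin m) => o.elim (ι (esymm (Fin (m+1)) ℂ (m+1))) E' := by
    funext o
    cases o with
    | none => simp [finSuccEquivLast, hfamA]
    | some i => simp [finSuccEquivLast, hE']
  have hopt : AlgebraicIndependent ℂ
      (fun o : Option (Fin m) => o.elim (ι (esymm (Fin (m+1)) ℂ (m+1))) E') := by
    rw [← hcomp2]
    exact (algebraicIndependent_equiv _).2 hfullF
  exact ((hE'indep.option_iff_transcendental _).1 hopt) hdesc
end

section
/- Let n ≥ 3 and let f₁, ..., fₙ ∈ ℂ[x₁, ..., xₙ] be given by f_i = e_i(x₁,...,xₙ) for 1 ≤ i ≤ n−1 (the elementary symmetric polynomials), and fₙ = x_{a} + x_{a+1} + ⋯ + x_{b} for some 1 ≤ a ≤ b ≤ n with (a, b) ≠ (1, n) (i.e., fₙ is the sum over a proper, nonempty interval of the variables). Then the Jacobian determinant det(∂f_i/∂x_j) is a nonzero polynomial. -/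
open Finset MvPolynomial

lemma pderiv_prod_X {n : ℕ} (j : Fin n) (A : Finset (Fin n)) :
    pderiv j (∏ i ∈ A, X i : MvPolynomial (Fin n) ℂ) =
      if j ∈ A then ∏ i ∈ A.erase j, X i else 0 := by
  classical
  induction A using Finset.induction_on with
  | empty => simp
  | insert c A ha ih =>
    rw [Finset.prod_insert ha, pderiv_mul, ih]
    by_cases hjc : j = c
    · subst hjc
      simp [pderiv_X_self, ha, Finset.erase_insert ha]
    · rw [pderiv_X_of_ne (Ne.symm hjc)]
      by_cases hjA : j ∈ A
      · simp only [hjA, if_true, Finset.mem_insert, hjc, or_true,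
          Finset.erase_insert_of_ne (Ne.symm hjc)]
        rw [Finset.prod_insert (fun hc => ha (Finset.mem_of_mem_erase hc))]
        ring
      · simp [hjA, hjc]

lemma eval_pderiv_esymm {n : ℕ} (p : Fin n → ℂ) (j : Fin n) (k : ℕ) :
    eval p (pderiv j (esymm (Fin n) ℂ (k + 1))) =
      ∑ A ∈ powersetCard k (Finset.univ.erase j), ∏ m ∈ A, p m := by
  classical
  rw [esymm, map_sum, map_sum]
  have h1 : ∀ A ∈ powersetCard (k+1) (Finset.univ : Finset (Fin n)),
      eval p (pderiv j (∏ i ∈ A, X i : MvPolynomial (Fin n) ℂ)) =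
        if j ∈ A then ∏ m ∈ A.erase j, p m else 0 := by
    intro A _
    rw [pderiv_prod_X]
    split_ifs <;> simp
  rw [Finset.sum_congr rfl h1, Finset.sum_ite, Finset.sum_const_zero, add_zero]
  refine Finset.sum_bij' (fun A _ => A.erase j) (fun B _ => insert j B) ?_ ?_ ?_ ?_ ?_
  · intro A hA
    simp only [Finset.mem_filter, Finset.mem_powersetCard] at hA
    exact Finset.mem_powersetCard.mpr ⟨Finset.erase_subset_erase _ hA.1.1,
      by rw [Finset.card_erase_of_mem hA.2, hA.1.2]; omega⟩
  · intro B hB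
    rw [Finset.mem_powersetCard] at hB
    have hjB : j ∉ B := fun h => (Finset.mem_erase.mp (hB.1 h)).1 rfl
    refine Finset.mem_filter.mpr ⟨Finset.mem_powersetCard.mpr ⟨Finset.subset_univ _, ?_⟩,
      Finset.mem_insert_self _ _⟩
    rw [Finset.card_insert_of_notMem hjB, hB.2]
  · intro A hA
    exact Finset.insert_erase (Finset.mem_filter.mp hA).2
  · intro B hB
    rw [Finset.mem_powersetCard] at hB
    exact Finset.erase_insert (fun h => (Finset.mem_erase.mp (hB.1 h)).1 rfl)
  · intro A _; rfl

lemma prod_linear_eq {n : ℕ} (hn : 1 ≤ n) (p : Fin n → ℂ) (j : Fin n) (t : ℂ) :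
    ∏ m ∈ Finset.univ.erase j, (t - p m) =
      ∑ k ∈ Finset.range n, (-1 : ℂ) ^ k *
        (∑ A ∈ powersetCard k (Finset.univ.erase j), ∏ m ∈ A, p m) * t ^ (n - 1 - k) := by
  classical
  have hc : (Finset.univ.erase j).card = n - 1 := by
    rw [Finset.card_erase_of_mem (Finset.mem_univ j), Finset.card_univ, Fintype.card_fin]
  simp_rw [sub_eq_neg_add]
  rw [Finset.prod_add, Finset.powerset_card_biUnion,
    Finset.sum_biUnion (fun i _ j _ hij => Finset.pairwise_disjoint_powersetCard _ hij), hc,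
    show n - 1 + 1 = n by omega]
  refine Finset.sum_congr rfl fun k hk => ?_
  rw [Finset.mul_sum, Finset.sum_mul]
  refine Finset.sum_congr rfl fun A hA => ?_
  obtain ⟨hsub, hcard⟩ := Finset.mem_powersetCard.mp hA
  have h1 : ∏ m ∈ A, (-p m) = (-1 : ℂ) ^ k * ∏ m ∈ A, p m := by
    rw [← hcard]
    have : ∀ m ∈ A, -p m = (-1 : ℂ) * p m := fun m _ => by ring
    rw [Finset.prod_congr rfl this, Finset.prod_mul_distrib, Finset.prod_const]
  rw [h1, Finset.prod_const, Finset.card_sdiff_of_subset hsub, hc, hcard]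

lemma aux15 (n a b : ℕ) (hn : 3 ≤ n) (i₁ i₂ : Fin n) (hne : i₁ ≠ i₂)
    (h1 : a ≤ (i₁ : ℕ) + 1 ∧ (i₁ : ℕ) + 1 ≤ b)
    (h2 : ¬(a ≤ (i₂ : ℕ) + 1 ∧ (i₂ : ℕ) + 1 ≤ b)) :
    Matrix.det (Matrix.of fun i j : Fin n =>
      MvPolynomial.pderiv j
        (if (i : ℕ) < n - 1 then MvPolynomial.esymm (Fin n) ℂ ((i : ℕ) + 1)
         else ∑ t ∈ Finset.univ.filter
            (fun t : Fin n => a ≤ (t : ℕ) + 1 ∧ (t : ℕ) + 1 ≤ b),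
           MvPolynomial.X t)) ≠ 0 := by
  classical
  intro hdet
  have hn1 : 1 ≤ n := by omega
  set P : Fin n → ℕ := fun j => if j = i₁ then (i₂ : ℕ) else (j : ℕ) with hPdef
  set p : Fin n → ℂ := fun j => (P j : ℂ) with hpdef
  -- basic facts about p
  have hp1 : p i₁ = p i₂ := by
    have h2' : i₂ ≠ i₁ := Ne.symm hne
    simp [hpdef, hPdef, h2']
  have hpl : ∀ l m : Fin n, l ≠ i₁ → l ≠ i₂ → m ≠ l → p l ≠ p m := by
    intro l m hl1 hl2 hml h
    simp only [hpdef, hPdef, Nat.cast_inj] at h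
    rw [if_neg hl1] at h
    by_cases hm : m = i₁
    · rw [if_pos hm] at h; exact hl2 (Fin.ext h)
    · rw [if_neg hm] at h; exact hml (Fin.ext h.symm)
  have hpnat : ∀ m : Fin n, (-1 : ℂ) - p m ≠ 0 := by
    intro m h
    have : ((P m + 1 : ℕ) : ℂ) = 0 := by push_cast; linear_combination -h
    rw [Nat.cast_eq_zero] at this
    omega
  set M := (Matrix.of fun i j : Fin n =>
      MvPolynomial.pderiv j
        (if (i : ℕ) < n - 1 then MvPolynomial.esymm (Fin n) ℂ ((i : ℕ) + 1)
         else ∑ t ∈ Finset.univ.filter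
            (fun t : Fin n => a ≤ (t : ℕ) + 1 ∧ (t : ℕ) + 1 ≤ b),
           MvPolynomial.X t)) with hM
  have hNdet : (M.map (eval p)).det = 0 := by
    have hmm : (eval p).mapMatrix M = M.map (eval p) := rfl
    rw [← hmm, ← RingHom.map_det, hdet, map_zero]
  obtain ⟨v, hv0, hv⟩ := Matrix.exists_mulVec_eq_zero_iff.mpr hNdet
  set E : ℕ → Fin n → ℂ :=
    fun k j => ∑ A ∈ powersetCard k (Finset.univ.erase j), ∏ m ∈ A, p m with hE
  -- the esymm rows
  have hrow : ∀ k : ℕ, k < n - 1 → (∑ j : Fin n, E k j * v j) = 0 := by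
    intro k hk
    have := congrFun hv ⟨k, by omega⟩
    simp only [Matrix.mulVec, dotProduct, Matrix.map_apply, Matrix.of_apply,
      Pi.zero_apply, hM] at this
    rw [← this]
    refine Finset.sum_congr rfl fun j _ => ?_
    rw [if_pos (show (k : ℕ) < n - 1 from hk), eval_pderiv_esymm]
  -- the last row
  have hlast : (∑ j ∈ Finset.univ.filter
      (fun t : Fin n => a ≤ (t : ℕ) + 1 ∧ (t : ℕ) + 1 ≤ b), v j) = 0 := by
    have := congrFun hv ⟨n - 1, by omega⟩
    simp only [Matrix.mulVec, dotProduct, Matrix.map_apply, Matrix.of_apply,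
      Pi.zero_apply, hM] at this
    rw [if_neg (by omega : ¬(n - 1 < n - 1))] at this
    rw [← this, Finset.sum_filter]
    refine Finset.sum_congr rfl fun j _ => ?_
    rw [map_sum, map_sum]
    have hX : ∀ t ∈ Finset.univ.filter
        (fun t : Fin n => a ≤ (t : ℕ) + 1 ∧ (t : ℕ) + 1 ≤ b),
        eval p (pderiv j (X t : MvPolynomial (Fin n) ℂ)) = if t = j then 1 else 0 := by
      intro t _
      rw [pderiv_X, Pi.single_apply]
      split_ifs <;> simp
    rw [Finset.sum_congr rfl hX, Finset.sum_ite_eq' _ j (fun _ => (1 : ℂ))]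
    by_cases hj : a ≤ (j : ℕ) + 1 ∧ (j : ℕ) + 1 ≤ b <;>
      simp [Finset.mem_filter, hj] <;> intro h <;> omega
  -- the interpolation identity
  set γ : ℂ := (-1 : ℂ) ^ (n - 1) * ∑ j : Fin n, E (n - 1) j * v j with hγ
  have hQ : ∀ t : ℂ, (∑ j : Fin n, v j * ∏ m ∈ Finset.univ.erase j, (t - p m)) = γ := by
    intro t
    have step1 : ∀ j : Fin n, v j * ∏ m ∈ Finset.univ.erase j, (t - p m) =
        ∑ k ∈ Finset.range n, v j * ((-1 : ℂ) ^ k * E k j * t ^ (n - 1 - k)) := by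
      intro j
      rw [prod_linear_eq hn1 p j t, Finset.mul_sum]
    rw [Finset.sum_congr rfl fun j _ => step1 j, Finset.sum_comm]
    have step2 : ∀ k ∈ Finset.range n,
        (∑ j : Fin n, v j * ((-1 : ℂ) ^ k * E k j * t ^ (n - 1 - k))) =
          ((-1 : ℂ) ^ k * t ^ (n - 1 - k)) * ∑ j : Fin n, E k j * v j := by
      intro k _
      rw [Finset.mul_sum]
      exact Finset.sum_congr rfl fun j _ => by ring
    rw [Finset.sum_congr rfl step2, Finset.sum_eq_single (n - 1)]
    · rw [show n - 1 - (n - 1) = 0 by omega, pow_zero, mul_one, hγ]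
    · intro k hk hkne
      rw [hrow k (by simp at hk; omega), mul_zero]
    · intro h
      exact absurd (Finset.mem_range.mpr (by omega)) h
  -- γ = 0 by evaluating at the doubled point
  have hγ0 : γ = 0 := by
    rw [← hQ (p i₂)]
    refine Finset.sum_eq_zero fun j _ => ?_
    rcases eq_or_ne j i₁ with h | h
    · subst h
      rw [Finset.prod_eq_zero (f := fun m => p i₂ - p m)
        (Finset.mem_erase.mpr ⟨Ne.symm hne, Finset.mem_univ i₂⟩)
        (by show p i₂ - p i₂ = 0; rw [sub_self]), mul_zero]
    · rw [Finset.prod_eq_zero (f := fun m => p i₂ - p m) (i := i₁)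
        (Finset.mem_erase.mpr ⟨Ne.symm h, Finset.mem_univ i₁⟩)
        (show p i₂ - p i₁ = 0 by rw [hp1, sub_self]), mul_zero]
  -- coordinates away from the pair vanish
  have hv_out : ∀ l : Fin n, l ≠ i₁ → l ≠ i₂ → v l = 0 := by
    intro l hl1 hl2
    have hQl := hQ (p l)
    rw [hγ0, Finset.sum_eq_single l] at hQl
    · have hprod : (∏ m ∈ Finset.univ.erase l, (p l - p m)) ≠ 0 := by
        rw [Finset.prod_ne_zero_iff]
        intro m hm
        exact sub_ne_zero_of_ne (hpl l m hl1 hl2 (Finset.mem_erase.mp hm).1)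
      exact (mul_eq_zero.mp hQl).resolve_right hprod
    · intro j _ hjl
      rw [Finset.prod_eq_zero (f := fun m => p l - p m)
        (Finset.mem_erase.mpr ⟨Ne.symm hjl, Finset.mem_univ l⟩)
        (by show p l - p l = 0; rw [sub_self]), mul_zero]
    · intro h; exact absurd (Finset.mem_univ l) h
  -- the two remaining coordinates are opposite
  have hprodeq : (∏ m ∈ Finset.univ.erase i₁, ((-1 : ℂ) - p m)) =
      ∏ m ∈ Finset.univ.erase i₂, ((-1 : ℂ) - p m) := by
    rw [← Finset.mul_prod_erase _ _ (Finset.mem_erase.mpr ⟨Ne.symm hne, Finset.mem_univ i₂⟩),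
      ← Finset.mul_prod_erase _ _ (Finset.mem_erase.mpr ⟨hne, Finset.mem_univ i₁⟩),
      Finset.erase_right_comm, hp1]
  have hpair : v i₂ = -v i₁ := by
    have hQm := hQ (-1)
    rw [hγ0, ← Finset.sum_subset (Finset.subset_univ ({i₁, i₂} : Finset (Fin n)))
      (fun x _ hx => by
        simp only [Finset.mem_insert, Finset.mem_singleton, not_or] at hx
        rw [hv_out x hx.1 hx.2, zero_mul])] at hQm
    rw [Finset.sum_insert (by simp [hne]), Finset.sum_singleton, hprodeq, ← add_mul] at hQm
    have hprod : (∏ m ∈ Finset.univ.erase i₂, ((-1 : ℂ) - p m)) ≠ 0 := by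
      rw [Finset.prod_ne_zero_iff]
      exact fun m _ => hpnat m
    have h0 := (mul_eq_zero.mp hQm).resolve_right hprod
    linear_combination h0
  -- v i₁ = 0 from the last row
  have hv1 : v i₁ = 0 := by
    rw [Finset.sum_eq_single i₁] at hlast
    · exact hlast
    · intro j hj hjne
      rcases eq_or_ne j i₂ with h | h
      · subst h; exact absurd (Finset.mem_filter.mp hj).2 h2
      · exact hv_out j hjne h
    · intro h
      exact absurd (Finset.mem_filter.mpr ⟨Finset.mem_univ i₁, h1⟩) h
  apply hv0
  funext l
  rcases eq_or_ne l i₁ with h | h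
  · subst h; exact hv1
  rcases eq_or_ne l i₂ with h' | h'
  · subst h'; rw [Pi.zero_apply, hpair, hv1, neg_zero]
  · exact hv_out l h h'

/-- For n ≥ 3, the polynomials e₁,...,e_{n−1} together with the
sum x_a + ⋯ + x_b over a proper nonempty interval ((a,b) ≠ (1,n)) have nonzero
Jacobian determinant. -/
theorem stmt15 (n a b : ℕ) (hn : 3 ≤ n) (ha : 1 ≤ a) (hab : a ≤ b) (hb : b ≤ n)
    (hproper : ¬(a = 1 ∧ b = n)) :
    Matrix.det (Matrix.of fun i j : Fin n =>
      MvPolynomial.pderiv j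
        (if (i : ℕ) < n - 1 then MvPolynomial.esymm (Fin n) ℂ ((i : ℕ) + 1)
         else ∑ t ∈ Finset.univ.filter
            (fun t : Fin n => a ≤ (t : ℕ) + 1 ∧ (t : ℕ) + 1 ≤ b),
           MvPolynomial.X t)) ≠ 0 := by
  have hcase : b < n ∨ 2 ≤ a := by
    by_contra h
    push_neg at h
    exact hproper ⟨by omega, by omega⟩
  have hi1 : a - 1 < n := by omega
  rcases hcase with hbn | ha2
  · exact aux15 n a b hn ⟨a - 1, hi1⟩ ⟨b, hbn⟩
      (Fin.ne_of_val_ne (show a - 1 ≠ b by omega))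
      ⟨show a ≤ a - 1 + 1 by omega, show a - 1 + 1 ≤ b by omega⟩
      (by rintro ⟨_, h⟩; exact absurd (show b + 1 ≤ b from h) (by omega))
  · exact aux15 n a b hn ⟨a - 1, hi1⟩ ⟨a - 2, by omega⟩
      (Fin.ne_of_val_ne (show a - 1 ≠ a - 2 by omega))
      ⟨show a ≤ a - 1 + 1 by omega, show a - 1 + 1 ≤ b by omega⟩
      (by rintro ⟨h, _⟩; exact absurd (show a ≤ a - 2 + 1 from h) (by omega))
end
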